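/- For every n ≥ 0, the number of words w in the alphabet {U, D} containing exactly n letters U and such that every prefix of w contains at least as many U's as D's (ballot words with n U's) equals the Catalan number C_{n+1} = (1/(n+2))·binom(2(n+1), n+1). Equivalently, the number of symmetric Dyck paths whose total number of arches and half-arches is n equals the number of Dyck paths of size n+1. -/

import Mathlib

attribute [local instance] Classical.propDecidable

namespace Stmt14Aux

open List
def Bal (l : List Bool) : Prop := ∀ p : List Bool, p <+: l → p.count false ≤ p.count true
def tL : Tree Unit → List Bool
  | BinaryTree.nil => []
  | BinaryTree.node _ l r => true :: (tL l ++ false :: tL r)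

lemma prefix_append_split {a b p : List Bool} (h : p <+: a ++ b) :
    p <+: a ∨ ∃ q, q <+: b ∧ p = a ++ q := by
  rcases le_or_gt p.length a.length with hl | hl
  · exact Or.inl ((List.isPrefix_append_of_length hl).mp h)
  · right
    have hp := List.prefix_iff_eq_take.mp h
    rw [List.take_append] at hp
    rw [List.take_of_length_le (le_of_lt hl)] at hp
    exact ⟨(b.take (p.length - a.length)), List.take_prefix _ _, hp⟩

lemma Bal.append_left {a b : List Bool} (h : Bal (a ++ b)) : Bal a :=
  fun p hp => h p (hp.trans (List.prefix_append a b))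

lemma tL_count_true (t : Tree Unit) : (tL t).count true = t.numNodes := by
  induction t with
  | nil => simp [tL]
  | node _ l r ihl ihr => simp [tL, Tree.numNodes, ihl, ihr, List.count_cons]

lemma tL_count_false (t : Tree Unit) : (tL t).count false = t.numNodes := by
  induction t with
  | nil => simp [tL]
  | node _ l r ihl ihr => simp [tL, Tree.numNodes, ihl, ihr, List.count_cons]; omega

lemma tL_bal (t : Tree Unit) : Bal (tL t) := by
  induction t with
  | nil => intro p hp; simp [tL] at hp; simp [hp]
  | node _ l r ihl ihr =>
    intro p hp
    rw [tL] at hp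
    cases p with
    | nil => simp
    | cons x q =>
      rw [List.cons_prefix_cons] at hp
      obtain ⟨rfl, hp⟩ := hp
      rcases prefix_append_split hp with h1 | ⟨q', hq', rfl⟩
      · have := ihl q h1
        simp; omega
      · cases q' with
        | nil =>
          have := ihl (tL l) (by simp)
          simp; omega
        | cons y q'' =>
          rw [List.cons_prefix_cons] at hq'
          obtain ⟨rfl, hq'⟩ := hq'
          have h1 := ihr q'' hq'
          have h2 : (tL l).count false ≤ (tL l).count true := ihl (tL l) (by simp)
          simp [List.count_append, List.count_cons]
          omega

lemma tL_no_overlap {a b : Tree Unit} {x y : List Bool}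
    (h : tL a ++ false :: x = tL b ++ false :: y) (hlt : (tL a).length < (tL b).length) :
    False := by
  have h1 : tL a ++ [false] <+: tL b ++ false :: y := by
    rw [← h]; exact ⟨x, by simp⟩
  have hpre : tL a ++ [false] <+: tL b :=
    (List.isPrefix_append_of_length (by simp; omega)).mp h1
  have := tL_bal b _ hpre
  simp [List.count_append, tL_count_true, tL_count_false] at this

lemma tL_inj : ∀ t s : Tree Unit, tL t = tL s → t = s := by
  intro t
  induction t with
  | nil => intro s h; cases s with
    | nil => rfl
    | node _ l r => simp [tL] at h
  | node u l r ihl ihr =>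
    intro s h
    cases s with
    | nil => simp [tL] at h
    | node u' l' r' =>
      simp only [tL, List.cons.injEq, true_and] at h
      have hlen : (tL l).length = (tL l').length := by
        rcases lt_trichotomy (tL l).length (tL l').length with hc | hc | hc
        · exact absurd (tL_no_overlap h hc) (by simp)
        · exact hc
        · exact absurd (tL_no_overlap h.symm hc) (by simp)
      obtain ⟨h1, h2⟩ := List.append_inj h hlen
      cases u; cases u'
      rw [ihl _ h1, ihr _ (by injection h2)]

open Classical in
lemma tL_surj_aux : ∀ N : ℕ, ∀ w : List Bool, w.length ≤ N → Bal w →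
    w.count false = w.count true → ∃ t, tL t = w := by
  intro N
  induction N with
  | zero =>
    intro w hw _ _
    have : w = [] := List.eq_nil_of_length_eq_zero (Nat.le_zero.mp hw)
    exact ⟨Tree.nil, by simp [tL, this]⟩
  | succ N ih =>
    intro w hw hb he
    cases hw0 : w with
    | nil => exact ⟨Tree.nil, by simp [tL]⟩
    | cons x v =>
      subst hw0
      -- first letter is true
      have hx : x = true := by
        have := hb [x] ⟨v, rfl⟩
        cases x
        · simp at this
        · rfl
      subst hx
      -- k : least positive index where the prefix is balanced
      have hex : ∃ m, 0 < m ∧ ((true :: v).take m).count false =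
          ((true :: v).take m).count true :=
        ⟨(true :: v).length, by simp, by rwa [List.take_length]⟩
      set w := true :: v with hwdef
      obtain ⟨k, ⟨hk0, hkbal⟩, hkmin⟩ :
          ∃ k, (0 < k ∧ (w.take k).count false = (w.take k).count true) ∧
            ∀ m, m < k → ¬(0 < m ∧ (w.take m).count false = (w.take m).count true) :=
        ⟨Nat.find hex, Nat.find_spec hex, fun m hm => Nat.find_min hex hm⟩
      have hkle : k ≤ w.length := by
        by_contra hgt
        push_neg at hgt
        refine hkmin w.length hgt ⟨by simp [hwdef], ?_⟩
        rwa [List.take_length]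
      have hk2 : 2 ≤ k := by
        by_contra hlt
        push_neg at hlt
        have : k = 1 := by omega
        rw [this] at hkbal
        simp [hwdef] at hkbal
      -- the k-th letter is false
      have hklt : k - 1 < w.length := by omega
      have htakek : w.take k = w.take (k-1) ++ [w[k-1]] := by
        have h1 : k = (k-1) + 1 := by omega
        conv_lhs => rw [h1]
        rw [List.take_succ, List.getElem?_eq_getElem (by omega)]
        simp
      have hgf : w[k-1] = false := by
        by_contra hgt
        have hgt : w[k-1] = true := by simpa using hgt
        rw [htakek, hgt] at hkbal
        simp [List.count_append] at hkbal
        have := hb (w.take (k-1)) (List.take_prefix _ _)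
        omega
      rw [hgf] at htakek
      -- decompose: w.take k = true :: a ++ [false]
      have htk1 : w.take (k-1) = true :: v.take (k-2) := by
        have : k - 1 = (k-2) + 1 := by omega
        rw [this, hwdef, List.take_succ_cons]
      set a := v.take (k-2) with hadef
      set q := w.drop k with hqdef
      have hwsplit : w = (true :: a ++ [false]) ++ q := by
        conv_lhs => rw [← List.take_append_drop k w]
        rw [htakek, htk1, ← hqdef]
      -- balance of the take-k block
      have hablock : a.count false + 1 = a.count true + 1 := by
        rw [htakek, htk1] at hkbal
        simp [List.count_append, List.count_cons] at hkbal
        omega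
      -- Bal a
      have hba : Bal a := by
        intro p hp
        by_contra hcon
        push_neg at hcon
        have hple : p.length ≤ k - 2 := by
          calc p.length ≤ a.length := hp.length_le
          _ ≤ k - 2 := by simp [hadef]
        have hpv : p <+: v := hp.trans (List.take_prefix _ _)
        have hpeq : p = v.take p.length := List.prefix_iff_eq_take.mp hpv
        have hptake : true :: p = w.take (p.length + 1) := by
          rw [hwdef, List.take_succ_cons, ← hpeq]
        have hbw := hb (true :: p) (by rw [hptake]; exact List.take_prefix _ _)
        simp [List.count_cons] at hbw
        have heq : p.count false = p.count true + 1 := by omega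
        have := hkmin (p.length + 1) (by omega)
        push_neg at this
        have := this (by omega)
        rw [← hptake] at this
        simp [List.count_cons, heq] at this
      -- Bal q and balance of q
      have htkF : (w.take k).count false = (w.take k).count true := hkbal
      have hbq : Bal q := by
        intro p hp
        obtain ⟨s, hs⟩ := hp
        have hpre : (w.take k) ++ p <+: w := by
          refine ⟨s, ?_⟩
          rw [List.append_assoc, hs, hqdef]
          exact List.take_append_drop k w
        have hbw := hb _ hpre
        simp [List.count_append] at hbw
        omega
      have hsplitcount : ∀ b : Bool, w.count b = (w.take k).count b + (w.drop k).count b := by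
        intro b
        conv_lhs => rw [← List.take_append_drop k w]
        rw [List.count_append]
      have heq : q.count false = q.count true := by
        have h1 := hsplitcount false
        have h2 := hsplitcount true
        rw [hqdef]
        omega
      -- recurse
      obtain ⟨ta, hta⟩ := ih a (by
        have : a.length ≤ k - 2 := by simp [hadef]
        have : w.length = v.length + 1 := by simp [hwdef]
        omega) hba (by omega)
      obtain ⟨tq, htq⟩ := ih q (by
        have : q.length = w.length - k := by simp [hqdef]
        have : w.length = v.length + 1 := by simp [hwdef]
        omega) hbq heq
      exact ⟨Tree.node () ta tq, by rw [tL, hta, htq, hwsplit]; simp⟩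

def tB : Tree Unit → List Bool
  | BinaryTree.nil => []
  | BinaryTree.node _ l BinaryTree.nil => tL l
  | BinaryTree.node _ l r@(BinaryTree.node _ _ _) => tL l ++ true :: tB r

lemma tB_node_ne (u : Unit) (l r : Tree Unit) (h : r ≠ Tree.nil) :
    tB (Tree.node u l r) = tL l ++ true :: tB r := by
  cases r with
  | nil => exact absurd rfl h
  | node => simp [tB]

lemma tB_bal (t : Tree Unit) : Bal (tB t) := by
  induction t with
  | nil => intro p hp; simp [tB] at hp; simp [hp]
  | node u l r ihl ihr =>
    cases r with
    | nil => simpa [tB] using tL_bal l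
    | node u' l' r' =>
      rw [tB_node_ne u l _ (by simp)]
      intro p hp
      rcases prefix_append_split hp with h1 | ⟨q, hq, rfl⟩
      · exact tL_bal l p h1
      · have hl := tL_bal l (tL l) (by simp)
        cases q with
        | nil => simpa using hl
        | cons y q' =>
          rw [List.cons_prefix_cons] at hq
          obtain ⟨rfl, hq⟩ := hq
          have := ihr q' hq
          simp [List.count_append, List.count_cons]
          omega

lemma tB_count_true (t : Tree Unit) (h : t ≠ Tree.nil) :
    (tB t).count true + 1 = t.numNodes := by
  induction t with
  | nil => exact absurd rfl h
  | node u l r ihl ihr =>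
    cases r with
    | nil => simp [tB, tL_count_true, Tree.numNodes]
    | node u' l' r' =>
      rw [tB_node_ne u l _ (by simp)]
      have := ihr (by simp)
      simp [List.count_append, List.count_cons, tL_count_true, Tree.numNodes] at *
      omega

lemma tB_inj : ∀ t s : Tree Unit, t ≠ Tree.nil → s ≠ Tree.nil → tB t = tB s → t = s := by
  intro t
  induction t with
  | nil => intro s h; exact absurd rfl h
  | node u l r ihl ihr =>
    intro s _ hs h
    cases s with
    | nil => exact absurd rfl hs
    | node u' l' r' =>
      -- auxiliary : the mixed case is impossible
      have mixed : ∀ (a b : Tree Unit) (rb : Tree Unit), rb ≠ Tree.nil →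
          tL a = tL b ++ true :: tB rb → False := by
        intro a b rb hrb habs
        have h1 : (tL a).count false = (tL a).count true := by
          rw [tL_count_false, tL_count_true]
        have h2 : (tL b).count false = (tL b).count true := by
          rw [tL_count_false, tL_count_true]
        have h3 : (tB rb).count false ≤ (tB rb).count true := tB_bal rb _ (by simp)
        rw [habs] at h1
        simp [List.count_append, List.count_cons] at h1
        omega
      -- the unequal-length overlap case is impossible
      have overlap : ∀ (a b ra rb : Tree Unit), ra ≠ Tree.nil → rb ≠ Tree.nil →
          tL a ++ true :: tB ra = tL b ++ true :: tB rb →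
          (tL a).length < (tL b).length → False := by
        intro a b ra rb hra hrb habs hlt
        have h0 : tL a ++ [true] <+: tL b ++ true :: tB rb := by
          rw [← habs]; exact ⟨tB ra, by simp⟩
        have h1 : tL a ++ [true] <+: tL b :=
          (List.isPrefix_append_of_length (by simp; omega)).mp h0
        obtain ⟨m, hm⟩ := h1
        have hb2 : (tL b).count false = (tL b).count true := by
          rw [tL_count_false, tL_count_true]
        rw [← hm] at hb2
        have hLa : (tL a).count false = (tL a).count true := by
          rw [tL_count_false, tL_count_true]
        simp [List.count_append, List.count_cons] at hb2
        -- so m has one more false than true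
        have hmc : m.count false = m.count true + 1 := by omega
        -- but m is a prefix of tB ra
        have hmp : m <+: tB ra := by
          rw [← hm] at habs
          simp only [List.append_assoc, List.singleton_append, List.append_cancel_left_eq] at habs
          simp only [List.cons_append, List.cons.injEq, true_and] at habs
          exact ⟨true :: tB rb, habs.symm⟩
        have := tB_bal ra _ hmp
        omega
      -- main case analysis
      cases r with
      | nil =>
        cases r' with
        | nil =>
          simp only [tB] at h
          cases u; cases u'
          rw [tL_inj _ _ h]
        | node v1 s1 s2 =>
          rw [tB_node_ne u' l' _ (by simp)] at h
          simp only [tB] at h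
          exact absurd (mixed l l' _ (by simp) h) (by simp)
      | node v1 s1 s2 =>
        cases r' with
        | nil =>
          rw [tB_node_ne u l _ (by simp)] at h
          simp only [tB] at h
          exact absurd (mixed l' l _ (by simp) h.symm) (by simp)
        | node v2 t1 t2 =>
          rw [tB_node_ne u l _ (by simp), tB_node_ne u' l' _ (by simp)] at h
          have hlen : (tL l).length = (tL l').length := by
            rcases lt_trichotomy (tL l).length (tL l').length with hc | hc | hc
            · exact absurd (overlap l l' _ _ (by simp) (by simp) h hc) (by simp)
            · exact hc
            · exact absurd (overlap l' l _ _ (by simp) (by simp) h.symm hc) (by simp)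
          obtain ⟨h1, h2⟩ := List.append_inj h hlen
          cases u; cases u'
          rw [tL_inj _ _ h1, ihr (Tree.node v2 t1 t2) (by simp) (by simp) (by injection h2)]

open Classical in
lemma tB_surj_aux : ∀ N : ℕ, ∀ w : List Bool, w.length ≤ N → Bal w →
    ∃ t, t ≠ Tree.nil ∧ tB t = w := by
  intro N
  induction N with
  | zero =>
    intro w hw _
    have hwe : w = [] := List.eq_nil_of_length_eq_zero (Nat.le_zero.mp hw)
    exact ⟨Tree.node () Tree.nil Tree.nil, by simp, by simp [tB, tL, hwe]⟩
  | succ N ih =>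
    intro w hw hb
    obtain ⟨k, hkle, hkbal, hkmax⟩ :
        ∃ k, k ≤ w.length ∧ (w.take k).count false = (w.take k).count true ∧
          ∀ m, k < m → m ≤ w.length → (w.take m).count false ≠ (w.take m).count true := by
      refine ⟨Nat.findGreatest (fun m => (w.take m).count false = (w.take m).count true) w.length,
        Nat.findGreatest_le _, ?_, ?_⟩
      · have h0 : (w.take 0).count false = (w.take 0).count true := by simp
        exact Nat.findGreatest_spec (P := fun m => (w.take m).count false = (w.take m).count true) (Nat.zero_le _) h0
      · intro m h1 h2
        exact Nat.findGreatest_is_greatest (P := fun m => (w.take m).count false = (w.take m).count true) h1 h2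
    have hbp : Bal (w.take k) := fun p hp => hb p (hp.trans (List.take_prefix _ _))
    obtain ⟨tl, htl⟩ := tL_surj_aux (w.take k).length (w.take k) le_rfl hbp hkbal
    cases hdrop : w.drop k with
    | nil =>
      have hweq : w = w.take k := by
        conv_lhs => rw [← List.take_append_drop k w]
        rw [hdrop, List.append_nil]
      exact ⟨Tree.node () tl Tree.nil, by simp, by rw [show tB (Tree.node () tl Tree.nil) = tL tl
        from by simp [tB], htl, ← hweq]⟩
    | cons x rest =>
      have hwsplit : w = w.take k ++ x :: rest := by
        conv_lhs => rw [← List.take_append_drop k w]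
        rw [hdrop]
      have htake1 : w.take (k + 1) = w.take k ++ [x] := by
        rw [List.take_add, hdrop]
        rfl
      have hklt : k < w.length := by
        by_contra hc
        push_neg at hc
        rw [List.drop_eq_nil_of_le hc] at hdrop
        exact List.cons_ne_nil x rest hdrop.symm
      have hx : x = true := by
        by_contra hc
        have hc : x = false := by simpa using hc
        subst hc
        have := hb (w.take (k+1)) (List.take_prefix _ _)
        rw [htake1] at this
        simp [List.count_append] at this
        omega
      subst hx
      have hbrest : Bal rest := by
        intro p hp
        obtain ⟨s, hs⟩ := hp
        have hpre : w.take k ++ true :: p <+: w := by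
          refine ⟨s, ?_⟩
          conv_rhs => rw [hwsplit]
          rw [List.append_assoc, List.cons_append, hs]
        have hbw := hb _ hpre
        simp [List.count_append, List.count_cons] at hbw
        by_contra hcon
        push_neg at hcon
        have hpeq : p.count false = p.count true + 1 := by omega
        -- then take k w ++ true :: p is a longer balanced prefix
        have hlen : (w.take k ++ true :: p).length = k + 1 + p.length := by
          simp [List.length_take, Nat.min_eq_left hkle]
          omega
        have heqtake : w.take (k + 1 + p.length) = w.take k ++ true :: p := by
          have := List.prefix_iff_eq_take.mp hpre
          rw [hlen] at this
          exact this.symm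
        refine hkmax (k + 1 + p.length) (by omega) ?_ ?_
        · have := hpre.length_le
          rw [hlen] at this
          exact this
        · rw [heqtake]
          simp [List.count_append, List.count_cons]
          omega
      obtain ⟨tr, htrne, htr⟩ := ih rest (by
        have : w.length = k + 1 + rest.length := by
          rw [hwsplit]
          simp [List.length_take, Nat.min_eq_left hkle]
          omega
        omega) hbrest
      refine ⟨Tree.node () tl tr, by simp, ?_⟩
      rw [tB_node_ne () tl tr htrne, htl, htr, ← hwsplit]

lemma card_ballot (n : ℕ) :
    Nat.card {w : List Bool // Bal w ∧ w.count true = n} = catalan (n + 1) := by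
  have hne : ∀ t : Tree Unit, t.numNodes = n + 1 → t ≠ Tree.nil := by
    intro t h hc; subst hc; simp [Tree.numNodes] at h
  let f : {t : Tree Unit // t ∈ Tree.treesOfNumNodesEq (n+1)} →
      {w : List Bool // Bal w ∧ w.count true = n} := fun t =>
    ⟨tB t.1, tB_bal t.1, by
      have h1 := BinaryTree.mem_treesOfNumNodesEq.mp t.2
      have := tB_count_true t.1 (hne t.1 h1)
      simp only [Tree.numNodes] at this
      omega⟩
  have hbij : Function.Bijective f := by
    constructor
    · intro a b hab
      have h1 := BinaryTree.mem_treesOfNumNodesEq.mp a.2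
      have h2 := BinaryTree.mem_treesOfNumNodesEq.mp b.2
      exact Subtype.ext (tB_inj a.1 b.1 (hne a.1 h1) (hne b.1 h2)
        (congrArg Subtype.val hab))
    · rintro ⟨w, hbw, hcw⟩
      obtain ⟨t, htne, htw⟩ := tB_surj_aux w.length w le_rfl hbw
      have hnum : t.numNodes = n + 1 := by
        have := tB_count_true t htne
        rw [htw, hcw] at this
        simp only [Tree.numNodes] at this ⊢
        omega
      exact ⟨⟨t, BinaryTree.mem_treesOfNumNodesEq.mpr hnum⟩, Subtype.ext htw⟩
  calc Nat.card {w : List Bool // Bal w ∧ w.count true = n}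
      = Nat.card {t : Tree Unit // t ∈ Tree.treesOfNumNodesEq (n+1)} :=
        (Nat.card_congr (Equiv.ofBijective f hbij)).symm
    _ = (Tree.treesOfNumNodesEq (n+1)).card := by
        exact Nat.card_eq_finsetCard _
    _ = catalan (n+1) := BinaryTree.treesOfNumNodesEq_card_eq_catalan (n+1)

lemma listA (l : List Bool) : ∀ (m : ℕ) (b : Bool),
    ((l.take m).count b) =
      (Finset.univ.filter fun j : Fin l.length => (j : ℕ) < m ∧ l.get j = b).card := by
  induction l with
  | nil => intro m b; simp
  | cons x t ih =>
    intro m b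
    cases m with
    | zero => simp
    | succ m =>
      rw [List.take_succ_cons, List.count_cons, ih m b, Finset.card_filter, Finset.card_filter]
      simp only [List.length_cons]
      rw [Fin.sum_univ_succ]
      simp only [List.length_cons, Fin.val_zero, Nat.zero_lt_succ, List.get_eq_getElem,
        List.getElem_cons_zero, true_and, Fin.val_succ, List.getElem_cons_succ,
        Nat.succ_lt_succ_iff, beq_iff_eq]
      omega

lemma fin_card_eq (L : ℕ) (w : Fin L → Bool) (m : ℕ) (b : Bool) :
    (Finset.univ.filter fun j : Fin L => (j : ℕ) < m ∧ w j = b).card =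
      ((List.ofFn w).take m).count b := by
  rw [listA]
  have hlen : (List.ofFn w).length = L := List.length_ofFn
  refine Finset.card_bij (fun j _ => Fin.cast hlen.symm j) ?_ ?_ ?_
  · intro a ha
    simp only [Finset.mem_filter, Finset.mem_univ, true_and] at ha ⊢
    simpa [List.get_ofFn] using ha
  · intro a ha b hb hab
    exact Fin.ext (by simpa using congrArg Fin.val hab)
  · intro c hc
    refine ⟨Fin.cast hlen c, ?_, rfl⟩
    simp only [Finset.mem_filter, Finset.mem_univ, true_and] at hc ⊢
    simp [List.get_ofFn] at hc
    exact hc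

lemma count_top_eq (L : ℕ) (w : Fin L → Bool) :
    (Finset.univ.filter fun j : Fin L => w j = true).card = (List.ofFn w).count true := by
  have h := fin_card_eq L w L true
  rw [List.take_of_length_le (by simp)] at h
  rw [← h]
  congr 1
  apply Finset.filter_congr
  intro j _
  simp [j.isLt]


end Stmt14Aux

/-- A word `w` (with `true = U`, `false = D`) satisfies the ballot condition: every
prefix contains at least as many `U`'s as `D`'s. -/
def prefixCond (L : ℕ) (w : Fin L → Bool) : Prop :=
  ∀ m ∈ Finset.range (L + 1),
    (Finset.univ.filter (fun j : Fin L => (j : ℕ) < m ∧ w j = false)).card ≤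
      (Finset.univ.filter (fun j : Fin L => (j : ℕ) < m ∧ w j = true)).card


namespace Stmt14Aux

lemma prefixCond_iff (L : ℕ) (w : Fin L → Bool) :
    prefixCond L w ↔ Bal (List.ofFn w) := by
  constructor
  · intro h p hp
    have hm : p.length ≤ L := by
      have := hp.length_le
      simpa using this
    have h2 := h p.length (Finset.mem_range.mpr (by omega))
    rw [fin_card_eq, fin_card_eq] at h2
    rwa [← List.prefix_iff_eq_take.mp hp] at h2
  · intro h m _
    rw [fin_card_eq, fin_card_eq]
    exact h _ (List.take_prefix _ _)

lemma len_eq (l : List Bool) : l.length = l.count true + l.count false := by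
  induction l with
  | nil => simp
  | cons x t ih =>
    cases x <;> simp [List.count_cons] <;> omega


end Stmt14Aux

open Stmt14Aux in
/-- the number of ballot words with exactly `n` `U`'s (any such word has
length at most `2n`) equals the Catalan number `C_{n+1}`. -/
theorem stmt_14 (n : ℕ) :
    (∑ L ∈ Finset.range (2 * n + 1),
      (Finset.univ.filter (fun w : Fin L → Bool =>
        prefixCond L w ∧
          (Finset.univ.filter (fun j => w j = true)).card = n)).card) =
      catalan (n + 1) := by
  classical
  have hstep : ∀ L : ℕ,
      (Finset.univ.filter (fun w : Fin L → Bool =>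
        prefixCond L w ∧ (Finset.univ.filter (fun j => w j = true)).card = n)).card =
      Nat.card {w : Fin L → Bool // Bal (List.ofFn w) ∧ (List.ofFn w).count true = n} := by
    intro L
    rw [Nat.card_eq_fintype_card, Fintype.card_subtype]
    congr 1
    apply Finset.filter_congr
    intro w _
    rw [prefixCond_iff, count_top_eq]
  calc (∑ L ∈ Finset.range (2 * n + 1),
      (Finset.univ.filter (fun w : Fin L → Bool =>
        prefixCond L w ∧ (Finset.univ.filter (fun j => w j = true)).card = n)).card)
      = ∑ L ∈ Finset.range (2 * n + 1),
        Nat.card {w : Fin L → Bool // Bal (List.ofFn w) ∧ (List.ofFn w).count true = n} := by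
        exact Finset.sum_congr rfl fun L _ => hstep L
    _ = ∑ L : Fin (2 * n + 1),
        Nat.card {w : Fin (L : ℕ) → Bool // Bal (List.ofFn w) ∧ (List.ofFn w).count true = n} :=
        (Fin.sum_univ_eq_sum_range (fun L =>
          Nat.card {w : Fin L → Bool // Bal (List.ofFn w) ∧ (List.ofFn w).count true = n})
          (2 * n + 1)).symm
    _ = Nat.card (Σ L : Fin (2 * n + 1),
        {w : Fin (L : ℕ) → Bool // Bal (List.ofFn w) ∧ (List.ofFn w).count true = n}) := by
        rw [Nat.card_eq_fintype_card, Fintype.card_sigma]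
        exact Finset.sum_congr rfl fun L _ => by rw [Nat.card_eq_fintype_card]
    _ = Nat.card {l : List Bool // Bal l ∧ l.count true = n} := by
        apply Nat.card_congr
        refine Equiv.ofBijective (fun x => ⟨List.ofFn x.2.1, by
          have := x.2.2
          simpa using this⟩) ⟨?_, ?_⟩
        · rintro ⟨⟨L1, hL1⟩, w1, h1⟩ ⟨⟨L2, hL2⟩, w2, h2⟩ h
          simp only [Subtype.mk.injEq] at h
          have hlen : L1 = L2 := by
            have := congrArg List.length h
            simpa using this
          subst hlen
          have : w1 = w2 := List.ofFn_injective h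
          subst this
          rfl
        · rintro ⟨l, hbl, hcl⟩
          have hlen : l.length ≤ 2 * n := by
            have h1 := len_eq l
            have h2 : l.count false ≤ l.count true := hbl l (by simp)
            omega
          refine ⟨⟨⟨l.length, by omega⟩, l.get, ?_⟩, ?_⟩
          · constructor
            · rwa [List.ofFn_get]
            · rwa [List.ofFn_get]
          · simp [List.ofFn_get]
    _ = catalan (n + 1) := card_ballot n
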